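/- arXiv:2507.14907 — 2 statements merged into one kernel-verified Lean document; each statement's English description precedes it below -/
import Mathlib

section
/- For any two bivectors φ, ψ ∈ Λ²V of the same rank on a finite-dimensional vector space V, there exists a linear automorphism f ∈ GL(V) such that (Λ²f)(φ) = ψ. -/
open Module LinearMap

universe u v w

section aux
variable {k : Type u} [Field k]

private lemma skew_of_alt {V : Type v} [AddCommGroup V] [Module k V]
    (φ : V →ₗ[k] V →ₗ[k] k) (hφ : ∀ x : V, φ x x = 0) (x y : V) : φ x y = - φ y x := by
  have h := hφ (x + y)
  simp only [map_add, LinearMap.add_apply, hφ x, hφ y, add_zero, zero_add] at h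
  exact eq_neg_of_add_eq_zero_right h

private lemma form_formula {V : Type v} [AddCommGroup V] [Module k V]
    (φ : V →ₗ[k] V →ₗ[k] k) (hφ : ∀ x : V, φ x x = 0) {u v : V} (huv : φ u v = 1)
    (a b c d : k) (w w' : V)
    (hw1 : φ u w = 0) (hw2 : φ v w = 0) (hw1' : φ u w' = 0) (hw2' : φ v w' = 0) :
    φ (a • u + b • v + w) (c • u + d • v + w') = a * d - b * c + φ w w' := by
  have hvu : φ v u = -1 := by rw [skew_of_alt φ hφ, huv]
  have hwu : φ w u = 0 := by rw [skew_of_alt φ hφ, hw1, neg_zero]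
  have hwv : φ w v = 0 := by rw [skew_of_alt φ hφ, hw2, neg_zero]
  simp only [map_add, map_smul, LinearMap.add_apply, LinearMap.smul_apply, smul_eq_mul,
    hφ u, hφ v, huv, hvu, hwu, hwv, hw1, hw2, hw1', hw2']
  ring

private lemma decomp {V : Type v} [AddCommGroup V] [Module k V] [FiniteDimensional k V]
    (φ : V →ₗ[k] V →ₗ[k] k) (hφ : ∀ x : V, φ x x = 0) {u v : V} (huv : φ u v = 1) :
    ∃ E : (k × k × ↥(ker (φ u) ⊓ ker (φ v))) ≃ₗ[k] V,
      (∀ (a b : k) (w : ↥(ker (φ u) ⊓ ker (φ v))), E (a, b, w) = a • u + b • v + ↑w) ∧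
      finrank k V = finrank k ↥(ker (φ u) ⊓ ker (φ v)) + 2 ∧
      finrank k (range φ) =
        finrank k (range (φ.domRestrict₁₂ (ker (φ u) ⊓ ker (φ v)) (ker (φ u) ⊓ ker (φ v)))) + 2 := by
  have hvu : φ v u = -1 := by rw [skew_of_alt φ hφ, huv]
  set Wm := ker (φ u) ⊓ ker (φ v) with hWm
  have hmem1 : ∀ w : Wm, φ u ↑w = 0 := fun w => (Submodule.mem_inf.mp w.2).1
  have hmem2 : ∀ w : Wm, φ v ↑w = 0 := fun w => (Submodule.mem_inf.mp w.2).2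
  have hmem1' : ∀ w : Wm, φ ↑w u = 0 := fun w => by
    rw [skew_of_alt φ hφ, hmem1, neg_zero]
  have hmem2' : ∀ w : Wm, φ ↑w v = 0 := fun w => by
    rw [skew_of_alt φ hφ, hmem2, neg_zero]
  set L : k × k × Wm →ₗ[k] V :=
    (toSpanSingleton k V u).coprod ((toSpanSingleton k V v).coprod Wm.subtype) with hLdef
  have hL : ∀ (a b : k) (w : Wm), L (a, b, w) = a • u + b • v + ↑w := by
    intro a b w
    simp [hLdef, toSpanSingleton_apply, add_assoc]

  have hinj : Function.Injective L := by
    rw [← LinearMap.ker_eq_bot]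
    apply LinearMap.ker_eq_bot'.mpr
    rintro ⟨a, b, w⟩ hp
    rw [hL] at hp
    have h1 : φ u (a • u + b • v + ↑w) = 0 := by rw [hp]; simp
    have h2 : φ v (a • u + b • v + ↑w) = 0 := by rw [hp]; simp
    simp only [map_add, map_smul, smul_eq_mul, hφ u, hφ v, huv, hvu, hmem1 w, hmem2 w,
      mul_zero, mul_one, mul_neg_one, add_zero, zero_add] at h1 h2
    have ha : a = 0 := by
      have : -a = 0 := by linear_combination h2
      linear_combination -this
    have hb : b = 0 := by linear_combination h1
    subst ha; subst hb
    simp only [zero_smul, zero_add] at hp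
    have : w = 0 := Subtype.ext hp
    simp [this]
  have hsurj : Function.Surjective L := by
    intro x
    have hmw : x - (φ x v) • u - (φ u x) • v ∈ Wm := by
      rw [hWm]
      refine Submodule.mem_inf.mpr ⟨?_, ?_⟩
      · rw [LinearMap.mem_ker]
        simp only [map_sub, map_smul, smul_eq_mul, hφ u, huv, mul_zero, mul_one]
        ring
      · rw [LinearMap.mem_ker]
        have hxv : φ x v = - φ v x := skew_of_alt φ hφ x v
        simp only [map_sub, map_smul, smul_eq_mul, hφ v, hvu, mul_zero, mul_neg_one, hxv]
        ring
    refine ⟨(φ x v, φ u x, ⟨x - (φ x v) • u - (φ u x) • v, hmw⟩), ?_⟩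
    rw [hL]
    simp only
    abel
  set E := LinearEquiv.ofBijective L ⟨hinj, hsurj⟩ with hE
  have hEapp : ∀ (a b : k) (w : Wm), E (a, b, w) = a • u + b • v + ↑w := fun a b w => hL a b w
  refine ⟨E, hEapp, ?_, ?_⟩
  · have h1 : finrank k (k × k × Wm) = finrank k V := E.finrank_eq
    simp only [finrank_prod, finrank_self] at h1
    omega
  · -- rank computation
    set A : Wm →ₗ[k] (V →ₗ[k] k) := φ ∘ₗ Wm.subtype with hA
    set res : (V →ₗ[k] k) →ₗ[k] (Wm →ₗ[k] k) := LinearMap.lcomp k k Wm.subtype with hres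
    have hcomp : φ.domRestrict₁₂ Wm Wm = res ∘ₗ A := by
      ext w x
      rfl
    set S : Submodule k (V →ₗ[k] k) := Submodule.span k {φ u, φ v} with hSdef
    have hS2 : finrank k S = 2 := by
      have hli : LinearIndependent k ![φ u, φ v] := by
        rw [LinearIndependent.pair_iff]
        intro s t hst
        have h1 := DFunLike.congr_fun hst v
        have h2 := DFunLike.congr_fun hst u
        simp only [LinearMap.add_apply, LinearMap.smul_apply, smul_eq_mul, huv, hvu, hφ u, hφ v,
          mul_zero, mul_one, mul_neg_one, add_zero, zero_add, LinearMap.zero_apply] at h1 h2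
        constructor
        · linear_combination h1
        · linear_combination -h2
      have hcard := finrank_span_eq_card hli
      rw [Matrix.range_cons_cons_empty] at hcard
      simpa using hcard
    have hsup : range φ = S ⊔ range A := by
      apply le_antisymm
      · rintro g ⟨x, rfl⟩
        obtain ⟨⟨a, b, w⟩, rfl⟩ := hsurj x
        rw [hL]
        have hexp : φ (a • u + b • v + ↑w) = a • φ u + b • φ v + A w := by
          simp [map_add, map_smul, hA]
        rw [hexp]
        refine Submodule.add_mem _ (Submodule.add_mem _ ?_ ?_) ?_
        · exact Submodule.mem_sup_left (Submodule.smul_mem _ _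
            (Submodule.subset_span (Set.mem_insert _ _)))
        · exact Submodule.mem_sup_left (Submodule.smul_mem _ _
            (Submodule.subset_span (Set.mem_insert_of_mem _ rfl)))
        · exact Submodule.mem_sup_right ⟨w, rfl⟩
      · apply sup_le
        · rw [hSdef, Submodule.span_le]
          rintro g (rfl | rfl)
          · exact ⟨u, rfl⟩
          · exact ⟨v, rfl⟩
        · rintro g ⟨w, rfl⟩
          exact ⟨↑w, rfl⟩
    have hdisj : Disjoint S (range A) := by
      rw [Submodule.disjoint_def]
      intro g hgS hgA
      obtain ⟨a, b, hab⟩ := Submodule.mem_span_pair.mp hgS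
      obtain ⟨w, rfl⟩ := hgA
      have h1 : a • φ u + b • φ v = A w := hab
      have hv' := DFunLike.congr_fun h1 v
      have hu' := DFunLike.congr_fun h1 u
      simp only [LinearMap.add_apply, LinearMap.smul_apply, smul_eq_mul, huv, hvu, hφ u, hφ v,
        mul_zero, mul_one, mul_neg_one, add_zero, zero_add, hA, LinearMap.coe_comp,
        Function.comp_apply, Submodule.coe_subtype, hmem1' w, hmem2' w] at hv' hu'
      have ha : a = 0 := hv'
      have hb : b = 0 := by linear_combination -hu'
      rw [← h1, ha, hb]
      simp
    have hadd : finrank k (range φ) = finrank k S + finrank k (range A) := by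
      have := Submodule.finrank_sup_add_finrank_inf_eq S (range A)
      rw [hdisj.eq_bot] at this
      simp only [finrank_bot, add_zero] at this
      rw [hsup, this]
    set F : ↥(range A) →ₗ[k] (Wm →ₗ[k] k) := res ∘ₗ (range A).subtype with hF
    have hFinj : Function.Injective F := by
      refine fun x y hxy => sub_eq_zero.mp ((?_ : ∀ m, F m = 0 → m = 0) (x - y) (by exact (F.map_sub x y).trans ((congrArg (· - F y) hxy).trans (sub_self (F y)))))
      rintro ⟨g, hg⟩ hFg
      obtain ⟨w, rfl⟩ := hg
      have hres0 : ∀ w' : Wm, φ (↑w) (↑w' : V) = 0 := by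
        intro w'
        have := DFunLike.congr_fun hFg w'
        simpa [hF, hres, hA] using this
      have : A w = 0 := by
        rw [hA]
        ext y
        obtain ⟨⟨a, b, w'⟩, rfl⟩ := hsurj y
        rw [hL]
        simp only [LinearMap.coe_comp, Function.comp_apply, Submodule.coe_subtype,
          map_add, map_smul, smul_eq_mul, hmem1' w, hmem2' w, hres0 w',
          mul_zero, add_zero, LinearMap.zero_apply]
      exact Subtype.ext this
    have hrangeF : range F = range (φ.domRestrict₁₂ Wm Wm) := by
      rw [hcomp, LinearMap.range_comp]
      rw [Submodule.range_subtype]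
      exact (LinearMap.range_comp _ _).symm
    have hfr : finrank k ↥(range A) = finrank k ↥(range (φ.domRestrict₁₂ Wm Wm)) := by
      rw [← hrangeF]
      exact (LinearEquiv.ofInjective F hFinj).finrank_eq
    rw [hadd, hS2, hfr]
    omega

private theorem key_equiv (k : Type u) [Field k] :
    ∀ (n : ℕ) (V : Type v) (W : Type w) [AddCommGroup V] [Module k V] [AddCommGroup W]
      [Module k W] [FiniteDimensional k V] [FiniteDimensional k W],
      finrank k V = n → finrank k W = n →
      ∀ (φ : V →ₗ[k] V →ₗ[k] k) (ψ : W →ₗ[k] W →ₗ[k] k),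
        (∀ x : V, φ x x = 0) → (∀ x : W, ψ x x = 0) →
        finrank k (range φ) = finrank k (range ψ) →
        ∃ f : V ≃ₗ[k] W, ∀ x y : V, ψ (f x) (f y) = φ x y := by
  intro n
  induction n using Nat.strong_induction_on with
  | _ n IH =>
    intro V W _ _ _ _ _ _ hV hW φ ψ hφ hψ hr
    by_cases hφ0 : φ = 0
    · have hψ0 : ψ = 0 := by
        rw [hφ0] at hr
        rw [LinearMap.range_zero, finrank_bot] at hr
        rw [eq_comm, Submodule.finrank_eq_zero, LinearMap.range_eq_bot] at hr
        exact hr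
      refine ⟨LinearEquiv.ofFinrankEq V W (hV.trans hW.symm), ?_⟩
      intro x y
      rw [hφ0, hψ0]
      simp
    · have hψ0 : ψ ≠ 0 := by
        intro h
        rw [h] at hr
        rw [LinearMap.range_zero, finrank_bot] at hr
        rw [Submodule.finrank_eq_zero, LinearMap.range_eq_bot] at hr
        exact hφ0 hr
      obtain ⟨u, v₀, huv₀⟩ : ∃ u v₀ : V, φ u v₀ ≠ 0 := by
        by_contra h
        push_neg at h
        exact hφ0 (by ext x y; exact h x y)
      obtain ⟨u₂, v₂₀, huv₂₀⟩ : ∃ u v₀ : W, ψ u v₀ ≠ 0 := by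
        by_contra h
        push_neg at h
        exact hψ0 (by ext x y; exact h x y)
      have huv : φ u ((φ u v₀)⁻¹ • v₀) = 1 := by
        rw [map_smul, smul_eq_mul, inv_mul_cancel₀ huv₀]
      have huv₂ : ψ u₂ ((ψ u₂ v₂₀)⁻¹ • v₂₀) = 1 := by
        rw [map_smul, smul_eq_mul, inv_mul_cancel₀ huv₂₀]
      set v : V := (φ u v₀)⁻¹ • v₀
      set v₂ : W := (ψ u₂ v₂₀)⁻¹ • v₂₀
      obtain ⟨Eφ, hEφ, hdimφ, hrkφ⟩ := decomp φ hφ huv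
      obtain ⟨Eψ, hEψ, hdimψ, hrkψ⟩ := decomp ψ hψ huv₂
      have hmlt : finrank k ↥(ker (φ u) ⊓ ker (φ v)) < n := by omega
      have hWψdim : finrank k ↥(ker (ψ u₂) ⊓ ker (ψ v₂))
          = finrank k ↥(ker (φ u) ⊓ ker (φ v)) := by omega
      have hrW : finrank k (range (φ.domRestrict₁₂ (ker (φ u) ⊓ ker (φ v))
            (ker (φ u) ⊓ ker (φ v))))
          = finrank k (range (ψ.domRestrict₁₂ (ker (ψ u₂) ⊓ ker (ψ v₂))
            (ker (ψ u₂) ⊓ ker (ψ v₂)))) := by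
        rw [hrkφ, hrkψ] at hr
        omega
      obtain ⟨g, hg⟩ := IH _ hmlt ↥(ker (φ u) ⊓ ker (φ v)) ↥(ker (ψ u₂) ⊓ ker (ψ v₂))
        rfl hWψdim _ _ (fun x => hφ ↑x) (fun x => hψ ↑x) hrW
      refine ⟨(Eφ.symm.trans ((LinearEquiv.refl k k).prodCongr
        ((LinearEquiv.refl k k).prodCongr g))).trans Eψ, ?_⟩
      intro x y
      obtain ⟨⟨a, b, w⟩, rfl⟩ := Eφ.surjective x
      obtain ⟨⟨c, d, w'⟩, rfl⟩ := Eφ.surjective y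
      have hfapp : ∀ (a : k) (b : k) (w : ↥(ker (φ u) ⊓ ker (φ v))),
          ((Eφ.symm.trans ((LinearEquiv.refl k k).prodCongr
            ((LinearEquiv.refl k k).prodCongr g))).trans Eψ) (Eφ (a, b, w)) = Eψ (a, b, g w) := by
        intro a b w
        simp [LinearEquiv.trans_apply, LinearEquiv.prodCongr_apply]
      rw [hfapp, hfapp, hEψ, hEψ, hEφ, hEφ]
      have hm1φ : ∀ w : ↥(ker (φ u) ⊓ ker (φ v)), φ u ↑w = 0 :=
        fun w => (Submodule.mem_inf.mp w.2).1
      have hm2φ : ∀ w : ↥(ker (φ u) ⊓ ker (φ v)), φ v ↑w = 0 :=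
        fun w => (Submodule.mem_inf.mp w.2).2
      have hm1ψ : ∀ w : ↥(ker (ψ u₂) ⊓ ker (ψ v₂)), ψ u₂ ↑w = 0 :=
        fun w => (Submodule.mem_inf.mp w.2).1
      have hm2ψ : ∀ w : ↥(ker (ψ u₂) ⊓ ker (ψ v₂)), ψ v₂ ↑w = 0 :=
        fun w => (Submodule.mem_inf.mp w.2).2
      rw [form_formula ψ hψ huv₂ a b c d _ _ (hm1ψ (g w)) (hm2ψ (g w)) (hm1ψ (g w')) (hm2ψ (g w')),
        form_formula φ hφ huv a b c d _ _ (hm1φ w) (hm2φ w) (hm1φ w') (hm2φ w')]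
      have hgw : ψ ↑(g w) ↑(g w') = φ ↑w ↑w' := hg w w'
      rw [hgw]

end aux

/-- For any two bivectors (alternating bilinear forms, in characteristic ≠ 2) of the
same rank on a finite-dimensional vector space `V`, there is a linear automorphism
`f ∈ GL(V)` carrying one to the other. -/
theorem bivectors_same_rank_equivalent
    {k V : Type*} [Field k] [AddCommGroup V] [Module k V] [FiniteDimensional k V]
    (h2 : (2 : k) ≠ 0)
    (φ ψ : V →ₗ[k] V →ₗ[k] k)
    (hφ : ∀ v : V, φ v v = 0) (hψ : ∀ v : V, ψ v v = 0)
    (hrank : Module.finrank k (LinearMap.range φ) = Module.finrank k (LinearMap.range ψ)) :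
    ∃ f : V ≃ₗ[k] V, ∀ v w : V, φ (f v) (f w) = ψ v w := by
  obtain ⟨f, hf⟩ := key_equiv k (Module.finrank k V) V V rfl rfl ψ φ hψ hφ hrank.symm
  exact ⟨f, fun v w => hf v w⟩
end

section
/- Let W be a 5-dimensional vector space over a field k of characteristic zero with basis x₁,…,x₅, and let φ₁ = x₁∧x₂ + x₃∧x₄, φ₂ = x₁∧x₃ + x₄∧x₅, φ₃ = x₁∧x₅ + x₂∧x₃. Then every nonzero linear combination αφ₁ + βφ₂ + γφ₃ has rank 4; equivalently, (αφ₁+βφ₂+γφ₃)∧(αφ₁+βφ₂+γφ₃) = 0 implies α = β = γ = 0. -/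
open ExteriorAlgebra

set_option maxHeartbeats 1000000

theorem plane_det4 {R : Type*} [CommRing R] (r0 r1 r2 r3 : Fin 4 → R) :
    (Matrix.of ![r0,r1,r2,r3]).det = r0 0*r1 1*r2 2*r3 3 - r0 0*r1 1*r2 3*r3 2 - r0 0*r1 2*r2 1*r3 3 + r0 0*r1 2*r2 3*r3 1 + r0 0*r1 3*r2 1*r3 2 - r0 0*r1 3*r2 2*r3 1 - r0 1*r1 0*r2 2*r3 3 + r0 1*r1 0*r2 3*r3 2 + r0 1*r1 2*r2 0*r3 3 - r0 1*r1 2*r2 3*r3 0 - r0 1*r1 3*r2 0*r3 2 + r0 1*r1 3*r2 2*r3 0 + r0 2*r1 0*r2 1*r3 3 - r0 2*r1 0*r2 3*r3 1 - r0 2*r1 1*r2 0*r3 3 + r0 2*r1 1*r2 3*r3 0 + r0 2*r1 3*r2 0*r3 1 - r0 2*r1 3*r2 1*r3 0 - r0 3*r1 0*r2 1*r3 2 + r0 3*r1 0*r2 2*r3 1 + r0 3*r1 1*r2 0*r3 2 - r0 3*r1 1*r2 2*r3 0 - r0 3*r1 2*r2 0*r3 1 + r0 3*r1 2*r2 1*r3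 0 := by
  rw [Matrix.det_succ_row_zero]
  simp [Fin.sum_univ_succ, Matrix.det_fin_three, Matrix.submatrix, Function.comp, Fin.succ,
    Fin.succAbove, Fin.castSucc, Fin.castAdd, Fin.castLE]
  ring

noncomputable def planeFam {k : Type*} [Field k] (s : Fin 4 → Fin 5) :
    ∀ i : ℕ, (Fin 5 → k) [⋀^Fin i]→ₗ[k] k
  | 4 => Matrix.detRowAlternating.compLinearMap (LinearMap.funLeft k k s)
  | _ => 0

noncomputable def planeCf {k : Type*} [Field k] (s : Fin 4 → Fin 5) :
    ExteriorAlgebra k (Fin 5 → k) →ₗ[k] k :=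
  liftAlternating (planeFam s)

theorem planeCf_quad {k : Type*} [Field k] (s : Fin 4 → Fin 5) (a b c d : Fin 5 → k) :
    planeCf s (ι k a * (ι k b * (ι k c * ι k d))) =
      (Matrix.of ![a ∘ s, b ∘ s, c ∘ s, d ∘ s]).det := by
  have h1 : ι k a * (ι k b * (ι k c * ι k d)) = ιMulti k 4 ![a,b,c,d] := by
    simp [ιMulti_apply, List.ofFn_succ, mul_assoc]
  rw [h1, planeCf, liftAlternating_apply_ιMulti]
  show (Matrix.detRowAlternating (R := k)).compLinearMap (LinearMap.funLeft k k s) ![a,b,c,d] = _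
  show Matrix.det (Matrix.of fun i => (LinearMap.funLeft k k s) (![a,b,c,d] i)) = _
  congr 1
  ext i j
  fin_cases i <;> rfl

def zdet (s : Fin 4 → Fin 5) (a b c d : Fin 5) : ℤ :=
  let A : Fin 4 → ℤ := fun j => if s j = a then 1 else 0
  let B : Fin 4 → ℤ := fun j => if s j = b then 1 else 0
  let C : Fin 4 → ℤ := fun j => if s j = c then 1 else 0
  let D : Fin 4 → ℤ := fun j => if s j = d then 1 else 0
  A 0*B 1*C 2*D 3 - A 0*B 1*C 3*D 2 - A 0*B 2*C 1*D 3 + A 0*B 2*C 3*D 1 + A 0*B 3*C 1*D 2 - A 0*B 3*C 2*D 1 - A 1*B 0*C 2*D 3 + A 1*B 0*C 3*D 2 + A 1*B 2*C 0*D 3 - A 1*B 2*C 3*D 0 - A 1*B 3*C 0*D 2 + A 1*B 3*C 2*D 0 + A 2*B 0*C 1*D 3 - A 2*B 0*C 3*D 1 - A 2*B 1*C 0*D 3 + A 2*B 1*C 3*D 0 + A 2*B 3*C 0*D 1 - A 2*B 3*C 1*D 0 - A 3*B 0*C 1*D 2 + A 3*B 0*C 2*D 1 + A 3*B 1*C 0*D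 2 - A 3*B 1*C 2*D 0 - A 3*B 2*C 0*D 1 + A 3*B 2*C 1*D 0

theorem planeCf_pair {k : Type*} [Field k] (s : Fin 4 → Fin 5) (a b c d : Fin 5) :
    planeCf s ((ι k (Pi.single a 1) * ι k (Pi.single b 1)) *
      (ι k (Pi.single c 1) * ι k (Pi.single d 1))) = ((zdet s a b c d : ℤ) : k) := by
  rw [mul_assoc, planeCf_quad, plane_det4]
  simp only [zdet]
  push_cast [apply_ite (Int.cast : ℤ → k)]
  simp only [Function.comp, Pi.single_apply]

theorem planeCf_pp {k : Type*} [Field k] (s : Fin 4 → Fin 5) (a b c d a' b' c' d' : Fin 5) :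
    planeCf s ((ι k (Pi.single a 1) * ι k (Pi.single b 1) + ι k (Pi.single c 1) * ι k (Pi.single d 1))
      * (ι k (Pi.single a' 1) * ι k (Pi.single b' 1) + ι k (Pi.single c' 1) * ι k (Pi.single d' 1)))
    = ((zdet s a b a' b' + zdet s a b c' d' + zdet s c d a' b'
        + zdet s c d c' d' : ℤ) : k) := by
  rw [add_mul, mul_add, mul_add]
  rw [map_add, map_add, map_add, planeCf_pair, planeCf_pair, planeCf_pair, planeCf_pair]
  push_cast
  ring

theorem plane_expand9 {k A : Type*} [CommRing k] [Ring A] [Algebra k A] (f : A →ₗ[k] k)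
    (u v w : A) (α β γ : k) :
    f ((α•u+β•v+γ•w)*(α•u+β•v+γ•w)) =
      α*α*f (u*u)+α*β*f (u*v)+α*γ*f (u*w)+β*α*f (v*u)+β*β*f (v*v)+β*γ*f (v*w)
      +γ*α*f (w*u)+γ*β*f (w*v)+γ*γ*f (w*w) := by
  simp only [add_mul, mul_add, smul_mul_assoc, mul_smul_comm, smul_smul, map_add, map_smul,
    smul_eq_mul]
  ring

set_option maxHeartbeats 1000000 in
/-- For `φ₁ = x₁∧x₂ + x₃∧x₄`, `φ₂ = x₁∧x₃ + x₄∧x₅`, `φ₃ = x₁∧x₅ + x₂∧x₃` in `Λ²W`,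
`dim W = 5`: every nonzero linear combination has rank 4, i.e. if the wedge square of
`αφ₁ + βφ₂ + γφ₃` vanishes then `α = β = γ = 0`. -/
theorem plane_disjoint_from_grassmannian
    {k : Type*} [Field k] [CharZero k] (α β γ : k) :
    let e : Fin 5 → (Fin 5 → k) := fun i => Pi.single i 1
    let φ₁ : ExteriorAlgebra k (Fin 5 → k) := ι k (e 0) * ι k (e 1) + ι k (e 2) * ι k (e 3)
    let φ₂ : ExteriorAlgebra k (Fin 5 → k) := ι k (e 0) * ι k (e 2) + ι k (e 3) * ι k (e 4)
    let φ₃ : ExteriorAlgebra k (Fin 5 → k) := ι k (e 0) * ι k (e 4) + ι k (e 1) * ι k (e 2)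
    let ψ := α • φ₁ + β • φ₂ + γ • φ₃
    ψ * ψ = 0 → α = 0 ∧ β = 0 ∧ γ = 0 := by
  intro e φ₁ φ₂ φ₃ ψ h
  have key : ∀ s : Fin 4 → Fin 5,
      α*α*planeCf s (φ₁*φ₁)+α*β*planeCf s (φ₁*φ₂)+α*γ*planeCf s (φ₁*φ₃)
      +β*α*planeCf s (φ₂*φ₁)+β*β*planeCf s (φ₂*φ₂)+β*γ*planeCf s (φ₂*φ₃)
      +γ*α*planeCf s (φ₃*φ₁)+γ*β*planeCf s (φ₃*φ₂)+γ*γ*planeCf s (φ₃*φ₃) = 0 := by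
    intro s
    rw [← plane_expand9 (planeCf s) φ₁ φ₂ φ₃ α β γ]
    show planeCf s (ψ*ψ) = 0
    rw [h]; simp
  have e1 := key ![0,1,2,3]
  have e2 := key ![0,1,2,4]
  have e3 := key ![0,2,3,4]
  simp only [φ₁, φ₂, φ₃, e, planeCf_pp] at e1 e2 e3
  rw [show (zdet ![0,1,2,3] 0 1 0 1 + zdet ![0,1,2,3] 0 1 2 3 + zdet ![0,1,2,3] 2 3 0 1 + zdet ![0,1,2,3] 2 3 2 3 : ℤ) = 2 from rfl,
    show (zdet ![0,1,2,3] 0 1 0 2 + zdet ![0,1,2,3] 0 1 3 4 + zdet ![0,1,2,3] 2 3 0 2 + zdet ![0,1,2,3] 2 3 3 4 : ℤ) = 0 from rfl,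
    show (zdet ![0,1,2,3] 0 1 0 4 + zdet ![0,1,2,3] 0 1 1 2 + zdet ![0,1,2,3] 2 3 0 4 + zdet ![0,1,2,3] 2 3 1 2 : ℤ) = 0 from rfl,
    show (zdet ![0,1,2,3] 0 2 0 1 + zdet ![0,1,2,3] 0 2 2 3 + zdet ![0,1,2,3] 3 4 0 1 + zdet ![0,1,2,3] 3 4 2 3 : ℤ) = 0 from rfl,
    show (zdet ![0,1,2,3] 0 2 0 2 + zdet ![0,1,2,3] 0 2 3 4 + zdet ![0,1,2,3] 3 4 0 2 + zdet ![0,1,2,3] 3 4 3 4 : ℤ) = 0 from rfl,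
    show (zdet ![0,1,2,3] 0 2 0 4 + zdet ![0,1,2,3] 0 2 1 2 + zdet ![0,1,2,3] 3 4 0 4 + zdet ![0,1,2,3] 3 4 1 2 : ℤ) = 0 from rfl,
    show (zdet ![0,1,2,3] 0 4 0 1 + zdet ![0,1,2,3] 0 4 2 3 + zdet ![0,1,2,3] 1 2 0 1 + zdet ![0,1,2,3] 1 2 2 3 : ℤ) = 0 from rfl,
    show (zdet ![0,1,2,3] 0 4 0 2 + zdet ![0,1,2,3] 0 4 3 4 + zdet ![0,1,2,3] 1 2 0 2 + zdet ![0,1,2,3] 1 2 3 4 : ℤ) = 0 from rfl,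
    show (zdet ![0,1,2,3] 0 4 0 4 + zdet ![0,1,2,3] 0 4 1 2 + zdet ![0,1,2,3] 1 2 0 4 + zdet ![0,1,2,3] 1 2 1 2 : ℤ) = 0 from rfl] at e1
  rw [show (zdet ![0,1,2,4] 0 1 0 1 + zdet ![0,1,2,4] 0 1 2 3 + zdet ![0,1,2,4] 2 3 0 1 + zdet ![0,1,2,4] 2 3 2 3 : ℤ) = 0 from rfl,
    show (zdet ![0,1,2,4] 0 1 0 2 + zdet ![0,1,2,4] 0 1 3 4 + zdet ![0,1,2,4] 2 3 0 2 + zdet ![0,1,2,4] 2 3 3 4 : ℤ) = 0 from rfl,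
    show (zdet ![0,1,2,4] 0 1 0 4 + zdet ![0,1,2,4] 0 1 1 2 + zdet ![0,1,2,4] 2 3 0 4 + zdet ![0,1,2,4] 2 3 1 2 : ℤ) = 0 from rfl,
    show (zdet ![0,1,2,4] 0 2 0 1 + zdet ![0,1,2,4] 0 2 2 3 + zdet ![0,1,2,4] 3 4 0 1 + zdet ![0,1,2,4] 3 4 2 3 : ℤ) = 0 from rfl,
    show (zdet ![0,1,2,4] 0 2 0 2 + zdet ![0,1,2,4] 0 2 3 4 + zdet ![0,1,2,4] 3 4 0 2 + zdet ![0,1,2,4] 3 4 3 4 : ℤ) = 0 from rfl,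
    show (zdet ![0,1,2,4] 0 2 0 4 + zdet ![0,1,2,4] 0 2 1 2 + zdet ![0,1,2,4] 3 4 0 4 + zdet ![0,1,2,4] 3 4 1 2 : ℤ) = 0 from rfl,
    show (zdet ![0,1,2,4] 0 4 0 1 + zdet ![0,1,2,4] 0 4 2 3 + zdet ![0,1,2,4] 1 2 0 1 + zdet ![0,1,2,4] 1 2 2 3 : ℤ) = 0 from rfl,
    show (zdet ![0,1,2,4] 0 4 0 2 + zdet ![0,1,2,4] 0 4 3 4 + zdet ![0,1,2,4] 1 2 0 2 + zdet ![0,1,2,4] 1 2 3 4 : ℤ) = 0 from rfl,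
    show (zdet ![0,1,2,4] 0 4 0 4 + zdet ![0,1,2,4] 0 4 1 2 + zdet ![0,1,2,4] 1 2 0 4 + zdet ![0,1,2,4] 1 2 1 2 : ℤ) = 2 from rfl] at e2
  rw [show (zdet ![0,2,3,4] 0 1 0 1 + zdet ![0,2,3,4] 0 1 2 3 + zdet ![0,2,3,4] 2 3 0 1 + zdet ![0,2,3,4] 2 3 2 3 : ℤ) = 0 from rfl,
    show (zdet ![0,2,3,4] 0 1 0 2 + zdet ![0,2,3,4] 0 1 3 4 + zdet ![0,2,3,4] 2 3 0 2 + zdet ![0,2,3,4] 2 3 3 4 : ℤ) = 0 from rfl,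
    show (zdet ![0,2,3,4] 0 1 0 4 + zdet ![0,2,3,4] 0 1 1 2 + zdet ![0,2,3,4] 2 3 0 4 + zdet ![0,2,3,4] 2 3 1 2 : ℤ) = 1 from rfl,
    show (zdet ![0,2,3,4] 0 2 0 1 + zdet ![0,2,3,4] 0 2 2 3 + zdet ![0,2,3,4] 3 4 0 1 + zdet ![0,2,3,4] 3 4 2 3 : ℤ) = 0 from rfl,
    show (zdet ![0,2,3,4] 0 2 0 2 + zdet ![0,2,3,4] 0 2 3 4 + zdet ![0,2,3,4] 3 4 0 2 + zdet ![0,2,3,4] 3 4 3 4 : ℤ) = 2 from rfl,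
    show (zdet ![0,2,3,4] 0 2 0 4 + zdet ![0,2,3,4] 0 2 1 2 + zdet ![0,2,3,4] 3 4 0 4 + zdet ![0,2,3,4] 3 4 1 2 : ℤ) = 0 from rfl,
    show (zdet ![0,2,3,4] 0 4 0 1 + zdet ![0,2,3,4] 0 4 2 3 + zdet ![0,2,3,4] 1 2 0 1 + zdet ![0,2,3,4] 1 2 2 3 : ℤ) = 1 from rfl,
    show (zdet ![0,2,3,4] 0 4 0 2 + zdet ![0,2,3,4] 0 4 3 4 + zdet ![0,2,3,4] 1 2 0 2 + zdet ![0,2,3,4] 1 2 3 4 : ℤ) = 0 from rfl,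
    show (zdet ![0,2,3,4] 0 4 0 4 + zdet ![0,2,3,4] 0 4 1 2 + zdet ![0,2,3,4] 1 2 0 4 + zdet ![0,2,3,4] 1 2 1 2 : ℤ) = 0 from rfl] at e3
  push_cast at e1 e2 e3
  have hα : α = 0 := mul_self_eq_zero.mp (by linear_combination e1/2)
  have hγ : γ = 0 := mul_self_eq_zero.mp (by linear_combination e2/2)
  have hβ : β = 0 := mul_self_eq_zero.mp (by linear_combination e3/2 - γ*hα/2 - α*hγ/2)
  exact ⟨hα, hβ, hγ⟩
end
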